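/- Let p be an odd prime and let d be an integer with Legendre symbol (d/p) = 1. Then for every real number x: det[x + ((j²+dk²)/p)]_{1≤j,k≤(p−1)/2} = (1 − ((p−1)/2)·x)·S(d,p), and det[x + ((j²+dk²)/p)]_{0≤j,k≤(p−1)/2} = (p·x + (p−1)/2)·S(d,p), where in each determinant the (j,k) entry is the real number x plus the Legendre symbol ((j²+dk²)/p). -/

import Mathlib

open Matrix Finset

section DetLemmas
variable {n : ℕ}

lemma updateRow_one_det (A : Matrix (Fin n) (Fin n) ℝ)
    (h : ∀ k, ∑ j, A j k = -1) (j : Fin n) :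
    (A.updateRow j (fun _ => 1)).det = -A.det := by
  have h1 : (fun _ => (1:ℝ)) = ∑ k : Fin n, (fun _ : Fin n => (-1:ℝ)) k • A k := by
    funext m
    simp only [Finset.sum_apply, Pi.smul_apply, smul_eq_mul, neg_one_mul]
    rw [show (∑ x : Fin n, -A x m) = -∑ x : Fin n, A x m by rw [← Finset.sum_neg_distrib], h m]
    norm_num
  rw [h1, Matrix.det_updateRow_sum]
  simp

lemma det_add_const (A : Matrix (Fin n) (Fin n) ℝ)
    (h : ∀ k, ∑ j, A j k = -1) (x : ℝ) :
    (Matrix.of fun j k : Fin n => x + A j k).det = (1 - n * x) * A.det := by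
  classical
  rcases Nat.eq_zero_or_pos n with hn | hn
  · subst hn
    simp [Matrix.det_isEmpty]
  have : NeZero n := ⟨hn.ne'⟩
  have expand : (Matrix.of fun j k : Fin n => x + A j k).det
      = ∑ s : Finset (Fin n), Matrix.detRowAlternating (s.piecewise (fun _ _ => x) A) :=
    Matrix.detRowAlternating.toMultilinearMap.map_add_univ
      (fun _ : Fin n => (fun _ : Fin n => x)) (fun j => A j)
  have hzero : ∀ s : Finset (Fin n), ¬ s.card ≤ 1 →
      Matrix.detRowAlternating (s.piecewise (fun _ _ => x) A) = 0 := by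
    intro s hs
    obtain ⟨a, ha, b, hb, hab⟩ := Finset.one_lt_card.mp (show 1 < s.card by omega)
    refine Matrix.detRowAlternating.map_eq_zero_of_eq _ ?_ hab
    simp [Finset.piecewise, ha, hb]
  have hfilter : (Finset.univ.filter (fun s : Finset (Fin n) => s.card ≤ 1))
      = insert (∅ : Finset (Fin n)) (Finset.univ.image (fun j : Fin n => {j})) := by
    ext s
    constructor
    · intro hs
      rw [Finset.mem_filter] at hs
      rcases Finset.card_le_one_iff_subset_singleton.mp hs.2 with ⟨a, hsub⟩
      rcases Finset.subset_singleton_iff.mp hsub with h' | h'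
      · simp [h']
      · simp [h']
    · intro hs
      rcases Finset.mem_insert.mp hs with h' | h'
      · simp [Finset.mem_filter, h']
      · obtain ⟨a, -, rfl⟩ := Finset.mem_image.mp h'
        simp [Finset.mem_filter]
  rw [expand,
    ← Finset.sum_filter_of_ne (p := fun s : Finset (Fin n) => s.card ≤ 1)
      (fun s _ hs => by by_contra hc; exact hs (hzero s hc)),
    hfilter, Finset.sum_insert (by simp), Finset.sum_image (by intro a _ b _ hab; exact Finset.singleton_inj.mp hab)]
  have hempty : Matrix.detRowAlternating ((∅ : Finset (Fin n)).piecewise (fun _ _ => x) A)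
      = A.det := by exact (congrArg (⇑Matrix.detRowAlternating) (Finset.piecewise_empty (f := fun _ _ => x) (g := (A : Fin n → Fin n → ℝ)))).trans rfl
  have hsingle : ∀ j : Fin n,
      Matrix.detRowAlternating (({j} : Finset (Fin n)).piecewise (fun _ _ => x) A)
      = x * (A.updateRow j (fun _ => 1)).det := by
    intro j
    rw [show ((({j} : Finset (Fin n)).piecewise (fun _ _ => x) A : Fin n → Fin n → ℝ)) = Function.update A j (fun _ : Fin n => x) from Finset.piecewise_singleton (f := fun _ _ => x) (g := (A : Fin n → Fin n → ℝ)) j]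
    have h2 : Function.update A j (fun _ : Fin n => x)
        = A.updateRow j (x • fun _ : Fin n => (1:ℝ)) := by
      have hv : (x • fun _ : Fin n => (1:ℝ)) = fun _ => x := by funext k; simp
      rw [Matrix.updateRow, hv]; rfl
    rw [h2]
    show (A.updateRow j (x • fun _ : Fin n => (1:ℝ))).det = x * (A.updateRow j fun _ => 1).det
    rw [Matrix.det_updateRow_smul]
  rw [hempty]
  simp only [hsingle, updateRow_one_det A h]
  rw [Finset.sum_const, Finset.card_univ, Fintype.card_fin]
  ring
end DetLemmas

open Finset

lemma sum_quadChar_sq_add (p : ℕ) [Fact p.Prime] (hp2 : p ≠ 2) (c : ZMod p) (hc : c ≠ 0) :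
    ∑ z : ZMod p, quadraticChar (ZMod p) (z ^ 2 + c) = -1 := by
  classical
  set χ := quadraticChar (ZMod p) with hχ
  have hF : ringChar (ZMod p) ≠ 2 := by
    rw [ZMod.ringChar_zmod_n]; exact hp2
  have step1 : ∀ u : ZMod p,
      ∑ z ∈ univ.filter (fun z : ZMod p => z ^ 2 = u), χ (z ^ 2 + c) = (χ u + 1) * χ (u + c) := by
    intro u
    rw [Finset.sum_congr rfl (fun z hz => by rw [(Finset.mem_filter.mp hz).2]),
      Finset.sum_const, nsmul_eq_mul]
    congr 1
    rw [← quadraticChar_card_sqrts hF u, ← Set.toFinset_setOf]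
  have step2 : ∑ z : ZMod p, χ (z ^ 2 + c) = ∑ u : ZMod p, (χ u + 1) * χ (u + c) := by
    rw [← Finset.sum_fiberwise_of_maps_to (g := fun z : ZMod p => z ^ 2)
      (fun x _ => Finset.mem_univ _) (fun z => χ (z ^ 2 + c))]
    exact Finset.sum_congr rfl fun u _ => step1 u
  have hA : ∑ u : ZMod p, χ (u + c) = 0 := by
    have he := Fintype.sum_equiv (Equiv.addRight c) (fun u : ZMod p => χ (u + c))
      (fun u => χ u) (fun u => rfl)
    rw [he]; exact quadraticChar_sum_zero hF
  have hB : ∑ u : ZMod p, χ u * χ (u + c) = -1 := by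
    have hmul : ∀ u : ZMod p, χ u * χ (u + c) = χ (u * (u + c)) :=
      fun u => (_root_.map_mul χ u (u + c)).symm
    calc ∑ u : ZMod p, χ u * χ (u + c)
        = ∑ u ∈ univ \ {(0 : ZMod p)}, χ (u * (u + c)) := by
          rw [Finset.sum_eq_sum_sdiff_singleton_add (Finset.mem_univ (0 : ZMod p))]
          have h0 : χ 0 * χ (0 + c) = 0 := by rw [MulChar.map_zero]; ring
          rw [h0, add_zero]
          exact Finset.sum_congr rfl fun u _ => hmul u
      _ = ∑ u ∈ univ \ {(0 : ZMod p)}, χ (1 + c * u⁻¹) := by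
          refine Finset.sum_congr rfl fun u hu => ?_
          have hu0 : u ≠ 0 := by simpa using (Finset.mem_sdiff.mp hu).2
          have : u * (u + c) = u ^ 2 * (1 + c * u⁻¹) := by
            field_simp
          rw [this, _root_.map_mul, quadraticChar_sq_one' hu0, one_mul]
      _ = ∑ v ∈ univ \ {(1 : ZMod p)}, χ v := by
          refine Finset.sum_nbij' (fun u => 1 + c * u⁻¹) (fun v => c * (v - 1)⁻¹) ?_ ?_ ?_ ?_ ?_
          · intro u hu
            have hu0 : u ≠ 0 := by simpa using (Finset.mem_sdiff.mp hu).2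
            simp only [Finset.mem_sdiff, Finset.mem_univ, true_and, Finset.mem_singleton]
            intro h1
            have : c * u⁻¹ = 0 := by linear_combination h1
            rcases mul_eq_zero.mp this with h | h
            · exact hc h
            · exact hu0 (inv_eq_zero.mp h)
          · intro v hv
            have hv1 : v ≠ 1 := by simpa using (Finset.mem_sdiff.mp hv).2
            simp only [Finset.mem_sdiff, Finset.mem_univ, true_and, Finset.mem_singleton]
            intro h0
            rcases mul_eq_zero.mp h0 with h | h
            · exact hc h
            · exact hv1 (by rwa [inv_eq_zero, sub_eq_zero] at h)
          · intro u hu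
            have hu0 : u ≠ 0 := by simpa using (Finset.mem_sdiff.mp hu).2
            field_simp
            rw [add_sub_cancel_left, div_self hc]
          · intro v hv
            have hv1 : v ≠ 1 := by simpa using (Finset.mem_sdiff.mp hv).2
            have : v - 1 ≠ 0 := sub_ne_zero.mpr hv1
            field_simp
            ring
          · intro u _; rfl
      _ = -1 := by
          have := Finset.sum_eq_sum_sdiff_singleton_add (Finset.mem_univ (1 : ZMod p)) χ
          rw [quadraticChar_sum_zero hF] at this
          have h1 : χ 1 = 1 := map_one χ
          linarith [this]
  calc ∑ z : ZMod p, χ (z ^ 2 + c) = ∑ u : ZMod p, (χ u + 1) * χ (u + c) := step2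
    _ = ∑ u : ZMod p, (χ u * χ (u + c) + χ (u + c)) := by
        refine Finset.sum_congr rfl fun u _ => by ring
    _ = -1 := by rw [Finset.sum_add_distrib, hA, hB]; ring

lemma fold_sum (p n : ℕ) [Fact p.Prime] (hpn : p = 2 * n + 1) (f : ZMod p → ℤ) :
    ∑ z : ZMod p, f (z ^ 2)
      = f 0 + 2 * ∑ j : Fin n, f ((((j : ℕ) + 1 : ℕ) : ZMod p) ^ 2) := by
  classical
  have hp0 : 0 < p := by omega
  have h1 : ∑ z : ZMod p, f (z ^ 2) = ∑ i ∈ range p, f (((i : ℕ) : ZMod p) ^ 2) := by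
    rw [← Fin.sum_univ_eq_sum_range (fun i => f ((i : ZMod p) ^ 2)) p]
    refine (Fintype.sum_bijective (fun i : Fin p => ((i : ℕ) : ZMod p)) ?_ _ _ fun i => rfl).symm
    constructor
    · intro a b hab
      have h := congrArg ZMod.val hab
      rw [ZMod.val_cast_of_lt a.isLt, ZMod.val_cast_of_lt b.isLt] at h
      exact Fin.ext h
    · intro z
      exact ⟨⟨z.val, ZMod.val_lt z⟩, by simp [ZMod.natCast_val]⟩
  have h2 : ∑ i ∈ range p, f (((i : ℕ) : ZMod p) ^ 2)
      = ∑ i ∈ range (n + 1), f (((i : ℕ) : ZMod p) ^ 2)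
        + ∑ i ∈ range n, f ((((n + 1 + i : ℕ)) : ZMod p) ^ 2) := by
    have e := Finset.sum_range_add (fun i => f (((i : ℕ) : ZMod p) ^ 2)) (n + 1) n
    rw [show (n + 1) + n = p by omega] at e
    exact e
  have h3 : ∀ i < n, ((((n + 1 + i : ℕ)) : ZMod p) ^ 2 : ZMod p)
      = (((n - i : ℕ) : ZMod p)) ^ 2 := by
    intro i hi
    have : ((n + 1 + i : ℕ) : ZMod p) = -(((n - i : ℕ) : ZMod p)) := by
      have hpe : ((p : ℕ) : ZMod p) = 0 := ZMod.natCast_self p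
      have : (n + 1 + i : ℕ) + (n - i : ℕ) = p := by omega
      calc ((n + 1 + i : ℕ) : ZMod p)
          = ((n + 1 + i : ℕ) : ZMod p) + (((n - i : ℕ) : ZMod p)) - (((n - i : ℕ) : ZMod p)) := by ring
        _ = -(((n - i : ℕ) : ZMod p)) := by
            rw [← Nat.cast_add, this, ZMod.natCast_self]; ring
    rw [this, neg_sq]
  have h4 : ∑ i ∈ range n, f ((((n + 1 + i : ℕ)) : ZMod p) ^ 2)
      = ∑ i ∈ range n, f ((((i + 1 : ℕ)) : ZMod p) ^ 2) := by
    have e := Finset.sum_range_reflect (fun i => f ((((n + 1 + i : ℕ)) : ZMod p) ^ 2)) n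
    refine e.symm.trans (Finset.sum_congr rfl fun i hi => ?_)
    have hi' : i < n := Finset.mem_range.mp hi
    rw [h3 (n - 1 - i) (by omega), show n - (n - 1 - i) = i + 1 by omega]
  have h5 : ∑ i ∈ range (n + 1), f (((i : ℕ) : ZMod p) ^ 2)
      = f 0 + ∑ i ∈ range n, f ((((i + 1 : ℕ)) : ZMod p) ^ 2) := by
    rw [Finset.sum_range_succ', add_comm]
    norm_num
  have h6 : ∑ j : Fin n, f ((((j : ℕ) + 1 : ℕ) : ZMod p) ^ 2)
      = ∑ i ∈ range n, f ((((i + 1 : ℕ)) : ZMod p) ^ 2) :=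
    Fin.sum_univ_eq_sum_range (fun i => f ((((i + 1 : ℕ)) : ZMod p) ^ 2)) n
  rw [h1, h2, h4, h5, h6]
  ring
lemma col_sum (p n : ℕ) [Fact p.Prime] (hp2 : p ≠ 2) (hpn : p = 2 * n + 1) (c : ℤ)
    (hc : legendreSym p c = 1) :
    ∑ j : Fin n, legendreSym p ((((j : ℕ) : ℤ) + 1) ^ 2 + c) = -1 := by
  classical
  have hc0 : ((c : ZMod p)) ≠ 0 := by
    intro h0
    rw [legendreSym, h0, MulChar.map_zero] at hc
    exact absurd hc (by norm_num)
  have key1 := sum_quadChar_sq_add p hp2 (c : ZMod p) hc0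
  have key2 := fold_sum p n hpn (fun u => quadraticChar (ZMod p) (u + (c : ZMod p)))
  have hterm : ∀ j : Fin n, legendreSym p ((((j : ℕ) : ℤ) + 1) ^ 2 + c)
      = quadraticChar (ZMod p) ((((j : ℕ) + 1 : ℕ) : ZMod p) ^ 2 + (c : ZMod p)) := by
    intro j
    rw [legendreSym]
    congr 1
    push_cast
    ring
  have hc' : quadraticChar (ZMod p) ((0 : ZMod p) + (c : ZMod p)) = 1 := by
    rw [zero_add]
    rw [legendreSym] at hc
    exact hc
  rw [key2, hc'] at key1
  have : ∑ j : Fin n, legendreSym p ((((j : ℕ) : ℤ) + 1) ^ 2 + c)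
      = ∑ j : Fin n, quadraticChar (ZMod p) ((((j : ℕ) + 1 : ℕ) : ZMod p) ^ 2 + (c : ZMod p)) :=
    Finset.sum_congr rfl fun j _ => hterm j
  rw [this]
  linarith

lemma legendre_one_of_ne (p : ℕ) [Fact p.Prime] (m : ℕ) (hm0 : 0 < m) (hmp : m < p) :
    legendreSym p ((m : ℤ) ^ 2) = 1 := by
  apply legendreSym.sq_one'
  intro h
  rw [ZMod.intCast_zmod_eq_zero_iff_dvd] at h
  rw [Int.natCast_dvd_natCast] at h
  have := Nat.le_of_dvd hm0 h
  omega

lemma colsum_real (p n : ℕ) [Fact p.Prime] (hp2 : p ≠ 2) (hpn : p = 2 * n + 1) (d : ℤ)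
    (hd : legendreSym p d = 1) (k : Fin n) :
    ∑ j : Fin n, ((legendreSym p ((((j : ℕ) : ℤ) + 1) ^ 2 + d * (((k : ℕ) : ℤ) + 1) ^ 2) : ℤ) : ℝ)
      = -1 := by
  have hc : legendreSym p (d * (((k : ℕ) : ℤ) + 1) ^ 2) = 1 := by
    rw [legendreSym.mul, hd, one_mul,
      show (((k : ℕ) : ℤ) + 1) = (((k : ℕ) + 1 : ℕ) : ℤ) by push_cast; ring]
    exact legendre_one_of_ne p ((k : ℕ) + 1) (by omega) (by have := k.isLt; omega)
  have hz := col_sum p n hp2 hpn _ hc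
  have : ((∑ j : Fin n, legendreSym p ((((j : ℕ) : ℤ) + 1) ^ 2 + d * (((k : ℕ) : ℤ) + 1) ^ 2) : ℤ) : ℝ)
      = ((-1 : ℤ) : ℝ) := by rw [hz]
  push_cast at this
  convert this using 1

lemma part1 (p n : ℕ) [Fact p.Prime] (hp2 : p ≠ 2) (hpn : p = 2 * n + 1) (d : ℤ)
    (hd : legendreSym p d = 1) (x : ℝ) :
    (Matrix.of fun j k : Fin n =>
        x + ((legendreSym p ((((j : ℕ) : ℤ) + 1) ^ 2 + d * (((k : ℕ) : ℤ) + 1) ^ 2) : ℤ) : ℝ)).det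
      = (1 - (n : ℝ) * x) *
        (Matrix.of fun j k : Fin n =>
          ((legendreSym p ((((j : ℕ) : ℤ) + 1) ^ 2 + d * (((k : ℕ) : ℤ) + 1) ^ 2) : ℤ) : ℝ)).det :=
  det_add_const _ (fun k => colsum_real p n hp2 hpn d hd k) x

lemma part2 (p n : ℕ) [Fact p.Prime] (hp2 : p ≠ 2) (hpn : p = 2 * n + 1) (d : ℤ)
    (hd : legendreSym p d = 1) (x : ℝ) :
    (Matrix.of fun j k : Fin ((p + 1) / 2) =>
        x + ((legendreSym p (((j : ℕ) : ℤ) ^ 2 + d * ((k : ℕ) : ℤ) ^ 2) : ℤ) : ℝ)).det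
      = ((p : ℝ) * x + (n : ℝ)) *
        (Matrix.of fun j k : Fin n =>
          ((legendreSym p ((((j : ℕ) : ℤ) + 1) ^ 2 + d * (((k : ℕ) : ℤ) + 1) ^ 2) : ℤ) : ℝ)).det := by
  classical
  set A : Matrix (Fin n) (Fin n) ℝ := Matrix.of fun j k : Fin n =>
    ((legendreSym p ((((j : ℕ) : ℤ) + 1) ^ 2 + d * (((k : ℕ) : ℤ) + 1) ^ 2) : ℤ) : ℝ) with hA
  have hcol : ∀ k : Fin n, ∑ j, A j k = -1 := fun k => colsum_real p n hp2 hpn d hd k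
  -- value lemmas
  have hv00 : legendreSym p (((0 : ℕ) : ℤ) ^ 2 + d * ((0 : ℕ) : ℤ) ^ 2) = 0 := by
    rw [show (((0 : ℕ) : ℤ) ^ 2 + d * ((0 : ℕ) : ℤ) ^ 2) = 0 by push_cast; ring]
    exact legendreSym.at_zero p
  have hsq : ∀ j : Fin n, legendreSym p ((((j : ℕ) + 1 : ℕ) : ℤ) ^ 2) = 1 := fun j =>
    legendre_one_of_ne p ((j : ℕ) + 1) (by omega) (by have := j.isLt; omega)
  have hv0k : ∀ k : Fin n,
      legendreSym p (((0 : ℕ) : ℤ) ^ 2 + d * (((k : ℕ) + 1 : ℕ) : ℤ) ^ 2) = 1 := by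
    intro k
    rw [show (((0 : ℕ) : ℤ) ^ 2 + d * (((k : ℕ) + 1 : ℕ) : ℤ) ^ 2)
        = d * (((k : ℕ) + 1 : ℕ) : ℤ) ^ 2 by push_cast; ring, legendreSym.mul, hd, one_mul]
    exact hsq k
  have hvj0 : ∀ j : Fin n,
      legendreSym p ((((j : ℕ) + 1 : ℕ) : ℤ) ^ 2 + d * ((0 : ℕ) : ℤ) ^ 2) = 1 := by
    intro j
    rw [show ((((j : ℕ) + 1 : ℕ) : ℤ) ^ 2 + d * ((0 : ℕ) : ℤ) ^ 2)
        = (((j : ℕ) + 1 : ℕ) : ℤ) ^ 2 by push_cast; ring]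
    exact hsq j
  have hvjk : ∀ j k : Fin n,
      ((legendreSym p ((((j : ℕ) + 1 : ℕ) : ℤ) ^ 2 + d * (((k : ℕ) + 1 : ℕ) : ℤ) ^ 2) : ℤ) : ℝ)
        = A j k := by
    intro j k
    rw [hA]
    show _ = ((legendreSym p ((((j : ℕ) : ℤ) + 1) ^ 2 + d * (((k : ℕ) : ℤ) + 1) ^ 2) : ℤ) : ℝ)
    congr 2 <;> push_cast <;> ring
  -- key computation for t ≠ 0
  have hne : ∀ t : ℝ, t ≠ 0 →
      (Matrix.of fun j k : Fin ((p + 1) / 2) =>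
        t + ((legendreSym p (((j : ℕ) : ℤ) ^ 2 + d * ((k : ℕ) : ℤ) ^ 2) : ℤ) : ℝ)).det
      = ((p : ℝ) * t + (n : ℝ)) * A.det := by
    intro t ht
    have hm : 1 + n = (p + 1) / 2 := by omega
    set e : Fin 1 ⊕ Fin n ≃ Fin ((p + 1) / 2) := finSumFinEquiv.trans (finCongr hm) with he
    have he1 : ∀ i : Fin 1, ((e (Sum.inl i) : Fin ((p + 1) / 2)) : ℕ) = 0 := by
      intro i
      have : (i : ℕ) = 0 := by omega
      simp [he, finCongr_apply, this]
    have he2 : ∀ j : Fin n, ((e (Sum.inr j) : Fin ((p + 1) / 2)) : ℕ) = (j : ℕ) + 1 := by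
      intro j
      simp [he, finCongr_apply]
      omega
    set X : Matrix (Fin 1) (Fin 1) ℝ := Matrix.of fun _ _ => t with hX
    set Bb : Matrix (Fin 1) (Fin n) ℝ := Matrix.of fun _ _ => t + 1 with hBb
    set Cb : Matrix (Fin n) (Fin 1) ℝ := Matrix.of fun _ _ => t + 1 with hCb
    set Db : Matrix (Fin n) (Fin n) ℝ := Matrix.of fun j k => t + A j k with hDb
    have hsub : (Matrix.of fun j k : Fin ((p + 1) / 2) =>
        t + ((legendreSym p (((j : ℕ) : ℤ) ^ 2 + d * ((k : ℕ) : ℤ) ^ 2) : ℤ) : ℝ)).submatrix e e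
        = Matrix.fromBlocks X Bb Cb Db := by
      ext i j
      rcases i with i | i <;> rcases j with j | j
      · rw [Matrix.submatrix_apply, Matrix.fromBlocks_apply₁₁, Matrix.of_apply,
          he1 i, he1 j, hv00]
        simp [hX]
      · rw [Matrix.submatrix_apply, Matrix.fromBlocks_apply₁₂, Matrix.of_apply,
          he1 i, he2 j, hv0k j]
        simp [hBb]
      · rw [Matrix.submatrix_apply, Matrix.fromBlocks_apply₂₁, Matrix.of_apply,
          he2 i, he1 j, hvj0 i]
        simp [hCb]
      · rw [Matrix.submatrix_apply, Matrix.fromBlocks_apply₂₂, Matrix.of_apply,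
          he2 i, he2 j]
        rw [hvjk i j]
        simp [hDb]
    letI instInv : Invertible X :=
      ⟨Matrix.of fun _ _ : Fin 1 => t⁻¹,
        by ext i j; simp [hX, Matrix.mul_apply, Matrix.one_apply, Fin.sum_univ_one,
            inv_mul_cancel₀ ht, Subsingleton.elim i j],
        by ext i j; simp [hX, Matrix.mul_apply, Matrix.one_apply, Fin.sum_univ_one,
            mul_inv_cancel₀ ht, Subsingleton.elim i j]⟩
    have hinv : (⅟X : Matrix (Fin 1) (Fin 1) ℝ) = Matrix.of fun _ _ => t⁻¹ := rfl
    have hschur : Cb * ⅟X * Bb = Matrix.of fun _ _ : Fin n => (t + 1) * t⁻¹ * (t + 1) := by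
      rw [hinv]
      ext i j
      simp [hCb, hBb, Matrix.mul_apply, Fin.sum_univ_one]
    have hD : Db - Cb * ⅟X * Bb
        = Matrix.of fun j k : Fin n => (t - (t + 1) * t⁻¹ * (t + 1)) + A j k := by
      rw [hschur]
      ext i j
      simp [hDb]
      ring
    calc (Matrix.of fun j k : Fin ((p + 1) / 2) =>
        t + ((legendreSym p (((j : ℕ) : ℤ) ^ 2 + d * ((k : ℕ) : ℤ) ^ 2) : ℤ) : ℝ)).det
        = ((Matrix.of fun j k : Fin ((p + 1) / 2) =>
            t + ((legendreSym p (((j : ℕ) : ℤ) ^ 2 + d * ((k : ℕ) : ℤ) ^ 2) : ℤ) : ℝ)).submatrix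
            e e).det := (Matrix.det_submatrix_equiv_self e _).symm
      _ = (Matrix.fromBlocks X Bb Cb Db).det := by rw [hsub]
      _ = X.det * (Db - Cb * ⅟X * Bb).det := Matrix.det_fromBlocks₁₁ X Bb Cb Db
      _ = t * ((1 - (n : ℝ) * (t - (t + 1) * t⁻¹ * (t + 1))) * A.det) := by
          rw [hD, det_add_const A hcol, Matrix.det_fin_one]
          simp [hX]
      _ = ((p : ℝ) * t + (n : ℝ)) * A.det := by
          have hp' : (p : ℝ) = 2 * (n : ℝ) + 1 := by
            rw [hpn]; push_cast; ring
          have hscalar : t * (1 - (n : ℝ) * (t - (t + 1) * t⁻¹ * (t + 1)))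
              = (p : ℝ) * t + (n : ℝ) := by
            rw [hp']; field_simp; ring
          rw [← hscalar]; ring
  -- continuity
  have hcont1 : Continuous fun t : ℝ => (Matrix.of fun j k : Fin ((p + 1) / 2) =>
      t + ((legendreSym p (((j : ℕ) : ℤ) ^ 2 + d * ((k : ℕ) : ℤ) ^ 2) : ℤ) : ℝ)).det := by
    apply Continuous.matrix_det
    apply continuous_matrix
    intro i j
    exact continuous_id.add continuous_const
  have hcont2 : Continuous fun t : ℝ => ((p : ℝ) * t + (n : ℝ)) * A.det :=
    (((continuous_const.mul continuous_id).add continuous_const).mul continuous_const)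
  have hfun := Continuous.ext_on (dense_compl_singleton (0 : ℝ)) hcont1 hcont2
    (fun t ht => hne t ht)
  exact congrFun hfun x

/-- For an odd prime `p`, `d : ℤ` with `(d/p) = 1`, and every real `x`:
`det[x + ((j²+dk²)/p)]_{1≤j,k≤(p−1)/2} = (1 − ((p−1)/2)·x)·S(d,p)` and
`det[x + ((j²+dk²)/p)]_{0≤j,k≤(p−1)/2} = (p·x + (p−1)/2)·S(d,p)`. -/
theorem stmt18 (p : ℕ) [Fact p.Prime] (hp2 : p ≠ 2) (d : ℤ)
    (hd : legendreSym p d = 1) (x : ℝ) :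
    Matrix.det (Matrix.of fun j k : Fin ((p - 1) / 2) =>
        x + (legendreSym p ((((j : ℕ) : ℤ) + 1) ^ 2 + d * (((k : ℕ) : ℤ) + 1) ^ 2) : ℝ)) =
      (1 - (((p - 1) / 2 : ℕ) : ℝ) * x) *
        (Matrix.det (Matrix.of fun j k : Fin ((p - 1) / 2) =>
          (legendreSym p ((((j : ℕ) : ℤ) + 1) ^ 2 + d * (((k : ℕ) : ℤ) + 1) ^ 2) : ℤ)) : ℝ) ∧
    Matrix.det (Matrix.of fun j k : Fin ((p + 1) / 2) =>
        x + (legendreSym p (((j : ℕ) : ℤ) ^ 2 + d * ((k : ℕ) : ℤ) ^ 2) : ℝ)) =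
      ((p : ℝ) * x + (((p - 1) / 2 : ℕ) : ℝ)) *
        (Matrix.det (Matrix.of fun j k : Fin ((p - 1) / 2) =>
          (legendreSym p ((((j : ℕ) : ℤ) + 1) ^ 2 + d * (((k : ℕ) : ℤ) + 1) ^ 2) : ℤ)) : ℝ) := by
  have hp : p.Prime := Fact.out
  have hodd : p % 2 = 1 := (Nat.Prime.eq_two_or_odd hp).resolve_left hp2
  have h2le : 2 ≤ p := hp.two_le
  have hpn : p = 2 * ((p - 1) / 2) + 1 := by omega
  exact ⟨part1 p ((p - 1) / 2) hp2 hpn d hd x, part2 p ((p - 1) / 2) hp2 hpn d hd x⟩
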